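/- Let K > 0 and let f: [a,b] → ℝ be a Lipschitz function with f ≥ 0 and (b−a)·√K < π. Then the following are equivalent: (i) f satisfies f'' + K f ≤ 0 in the distributional sense on (a,b); (ii) for all t₀, t₁ ∈ [a,b] with t₀ ≠ t₁ and all s ∈ [0,1], f((1−s)t₀ + s t₁) ≥ (sin((1−s)√K·|t₁−t₀|)/sin(√K·|t₁−t₀|))·f(t₀) + (sin(s√K·|t₁−t₀|)/sin(√K·|t₁−t₀|))·f(t₁). -/

import Mathlib

set_option maxHeartbeats 1000000
open Real Set MeasureTheory intervalIntegral


lemma sinpos {K a b x : ℝ} (hK : 0 < K) (hab : a < b) (hsize : (b - a) * Real.sqrt K < Real.pi)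
    (hx : 0 < x) (hxb : x ≤ b - a) : 0 < Real.sin (Real.sqrt K * x) := by
  have hω : 0 < Real.sqrt K := Real.sqrt_pos.2 hK
  apply Real.sin_pos_of_pos_of_lt_pi (by positivity)
  calc Real.sqrt K * x ≤ Real.sqrt K * (b - a) := by nlinarith
    _ < Real.pi := by nlinarith

lemma bridge (K a b : ℝ) (hK : 0 < K) (hab : a < b) (F : ℝ → ℝ)
    (hsize : (b - a) * Real.sqrt K < Real.pi) :
    (∀ p q t : ℝ, a ≤ p → q ≤ b → p < t → t < q →
      Real.sin (Real.sqrt K * (q - t)) * F p + Real.sin (Real.sqrt K * (t - p)) * F q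
        ≤ Real.sin (Real.sqrt K * (q - p)) * F t)
    ↔ (∀ t₀ ∈ Set.Icc a b, ∀ t₁ ∈ Set.Icc a b, t₀ ≠ t₁ → ∀ s ∈ Set.Icc (0 : ℝ) 1,
        Real.sin ((1 - s) * (Real.sqrt K * |t₁ - t₀|)) / Real.sin (Real.sqrt K * |t₁ - t₀|)
            * F t₀
          + Real.sin (s * (Real.sqrt K * |t₁ - t₀|)) / Real.sin (Real.sqrt K * |t₁ - t₀|)
            * F t₁
          ≤ F ((1 - s) * t₀ + s * t₁)) := by
  have hω : 0 < Real.sqrt K := Real.sqrt_pos.2 hK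
  constructor
  · intro hcore t₀ h₀ t₁ h₁ hne s hs
    obtain ⟨hs0, hs1⟩ := hs
    rcases hne.lt_or_gt with hlt | hlt
    · -- t₀ < t₁
      have habs : |t₁ - t₀| = t₁ - t₀ := abs_of_pos (by linarith)
      have hS : 0 < Real.sin (Real.sqrt K * |t₁ - t₀|) := by
        rw [habs]; exact sinpos hK hab hsize (by linarith) (by have := h₀.1; have := h₁.2; linarith)
      rcases eq_or_lt_of_le hs0 with rfl | hs0'
      · simp only [sub_zero, one_mul, zero_mul, Real.sin_zero, zero_div, add_zero, zero_add]
        rw [div_mul_eq_mul_div, mul_comm, mul_div_assoc, div_self hS.ne', mul_one]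
      rcases eq_or_lt_of_le hs1 with rfl | hs1'
      · simp only [sub_self, zero_mul, Real.sin_zero, zero_div, one_mul, zero_add, add_zero,
          zero_mul]
        rw [div_mul_eq_mul_div, mul_comm, mul_div_assoc, div_self hS.ne', mul_one]
      · set t := (1 - s) * t₀ + s * t₁ with ht
        have h1 : t₀ < t := by nlinarith
        have h2 : t < t₁ := by nlinarith
        have key := hcore t₀ t₁ t h₀.1 h₁.2 h1 h2
        have e1 : Real.sqrt K * (t₁ - t) = (1 - s) * (Real.sqrt K * |t₁ - t₀|) := by
          rw [habs, ht]; ring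
        have e2 : Real.sqrt K * (t - t₀) = s * (Real.sqrt K * |t₁ - t₀|) := by
          rw [habs]; rw [ht]; ring
        have e3 : Real.sqrt K * (t₁ - t₀) = Real.sqrt K * |t₁ - t₀| := by rw [habs]
        rw [e1, e2, e3] at key
        rw [div_mul_eq_mul_div, div_mul_eq_mul_div, ← add_div, div_le_iff₀ hS]
        linarith [key]
    · -- t₁ < t₀
      have habs : |t₁ - t₀| = t₀ - t₁ := by rw [abs_sub_comm]; exact abs_of_pos (by linarith)
      have hS : 0 < Real.sin (Real.sqrt K * |t₁ - t₀|) := by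
        rw [habs]; exact sinpos hK hab hsize (by linarith) (by have := h₁.1; have := h₀.2; linarith)
      rcases eq_or_lt_of_le hs0 with rfl | hs0'
      · simp only [sub_zero, one_mul, zero_mul, Real.sin_zero, zero_div, add_zero, zero_add]
        rw [div_mul_eq_mul_div, mul_comm, mul_div_assoc, div_self hS.ne', mul_one]
      rcases eq_or_lt_of_le hs1 with rfl | hs1'
      · simp only [sub_self, zero_mul, Real.sin_zero, zero_div, one_mul, zero_add, add_zero,
          zero_mul]
        rw [div_mul_eq_mul_div, mul_comm, mul_div_assoc, div_self hS.ne', mul_one]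
      · set t := (1 - s) * t₀ + s * t₁ with ht
        have h1 : t₁ < t := by nlinarith
        have h2 : t < t₀ := by nlinarith
        have key := hcore t₁ t₀ t h₁.1 h₀.2 h1 h2
        have e1 : Real.sqrt K * (t₀ - t) = s * (Real.sqrt K * |t₁ - t₀|) := by
          rw [habs, ht]; ring
        have e2 : Real.sqrt K * (t - t₁) = (1 - s) * (Real.sqrt K * |t₁ - t₀|) := by
          rw [habs, ht]; ring
        have e3 : Real.sqrt K * (t₀ - t₁) = Real.sqrt K * |t₁ - t₀| := by rw [habs]
        rw [e1, e2, e3] at key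
        rw [div_mul_eq_mul_div, div_mul_eq_mul_div, ← add_div, div_le_iff₀ hS]
        linarith [key]
  · intro hconc p q t hp hq h1 h2
    have hpq : p < q := h1.trans h2
    have hS : 0 < Real.sin (Real.sqrt K * (q - p)) := by
      exact sinpos hK hab hsize (by linarith) (by linarith)
    have habs : |q - p| = q - p := abs_of_pos (by linarith)
    set s : ℝ := (t - p) / (q - p) with hsdef
    have hqp : (0:ℝ) < q - p := by linarith
    have hs0 : 0 < s := div_pos (by linarith) hqp
    have hs1 : s < 1 := by rw [hsdef, div_lt_one hqp]; linarith
    have hpt : (1 - s) * p + s * q = t := by rw [hsdef]; field_simp; ring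
    have key := hconc p ⟨hp, by linarith⟩ q ⟨by linarith, hq⟩ (by linarith) s
      ⟨hs0.le, hs1.le⟩
    rw [hpt, habs] at key
    have e1 : (1 - s) * (Real.sqrt K * (q - p)) = Real.sqrt K * (q - t) := by
      rw [hsdef]; field_simp; ring
    have e2 : s * (Real.sqrt K * (q - p)) = Real.sqrt K * (t - p) := by
      rw [hsdef]; field_simp
    rw [e1, e2] at key
    rw [div_mul_eq_mul_div, div_mul_eq_mul_div, ← add_div, div_le_iff₀ hS] at key
    linarith


lemma symm_second (φ : ℝ → ℝ) (hφ : ContDiff ℝ (⊤ : ℕ∞) φ) {h ε : ℝ} (hh : 0 < h)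
    (hmod : ∀ x y : ℝ, |x - y| ≤ h → |deriv (deriv φ) x - deriv (deriv φ) y| ≤ ε) (t : ℝ) :
    |φ (t + h) + φ (t - h) - 2 * φ t - h ^ 2 * deriv (deriv φ) t| ≤ h ^ 2 * ε := by
  have hφ1 : ContDiff ℝ (⊤ : ℕ∞) (deriv φ) := by
    simpa using hφ.iterate_deriv 1
  have hφ2 : ContDiff ℝ (⊤ : ℕ∞) (deriv (deriv φ)) := by
    have := hφ.iterate_deriv 2
    simpa [Function.iterate_succ, Function.comp] using this
  have hc1 : Continuous (deriv φ) := hφ1.continuous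
  have hc2 : Continuous (deriv (deriv φ)) := hφ2.continuous
  have hd1 : ∀ x, HasDerivAt φ (deriv φ x) x :=
    fun x => (hφ.differentiable (by simp) x).hasDerivAt
  have hd2 : ∀ x, HasDerivAt (deriv φ) (deriv (deriv φ) x) x :=
    fun x => (hφ1.differentiable (by simp) x).hasDerivAt
  set D := deriv (deriv φ) t with hD
  set E : ℝ → ℝ := fun u => deriv φ (t + u) - deriv φ (t - u) - 2 * u * D with hE
  have hEcont : Continuous E := by
    apply Continuous.sub
    · exact (hc1.comp (continuous_const.add continuous_id)).sub
        (hc1.comp (continuous_const.sub continuous_id))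
    · exact (continuous_const.mul continuous_id).mul continuous_const
  -- step 1: the main identity
  have step1 : φ (t + h) + φ (t - h) - 2 * φ t - h ^ 2 * D = ∫ u in (0:ℝ)..h, E u := by
    have hg : ∀ u ∈ Set.uIcc (0:ℝ) h, HasDerivAt (fun u => φ (t + u) + φ (t - u) - u ^ 2 * D)
        (E u) u := by
      intro u _
      have A : HasDerivAt (fun u => φ (t + u)) (deriv φ (t + u)) u := by
        simpa [Function.comp_def] using (hd1 (t + u)).comp u ((hasDerivAt_id u).const_add t)
      have B : HasDerivAt (fun u => φ (t - u)) (-deriv φ (t - u)) u := by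
        simpa [Function.comp_def] using (hd1 (t - u)).comp u ((hasDerivAt_id u).const_sub t)
      have Cd : HasDerivAt (fun u : ℝ => u ^ 2 * D) (2 * u * D) u := by
        have := ((hasDerivAt_pow 2 u).mul_const D)
        simpa [mul_comm] using this
      have := (A.add B).sub Cd
      simpa [hE, sub_eq_add_neg, Pi.add_def, Pi.neg_def] using this
    have hint : IntervalIntegrable E volume 0 h := hEcont.intervalIntegrable _ _
    have := intervalIntegral.integral_eq_sub_of_hasDerivAt hg hint
    rw [this]; simp; ring
  -- step 2: pointwise bound on E
  have step2 : ∀ u, 0 < u → u ≤ h → |E u| ≤ 2 * u * ε := by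
    intro u hu huh
    have key : deriv φ (t + u) - deriv φ (t - u) = ∫ x in (t - u)..(t + u), deriv (deriv φ) x := by
      rw [intervalIntegral.integral_eq_sub_of_hasDerivAt (fun x _ => hd2 x)
        (hc2.intervalIntegrable _ _)]
    have key2 : (2 : ℝ) * u * D = ∫ x in (t - u)..(t + u), D := by
      rw [intervalIntegral.integral_const, smul_eq_mul]; ring
    have : E u = ∫ x in (t - u)..(t + u), (deriv (deriv φ) x - D) := by
      rw [hE]; simp only
      rw [intervalIntegral.integral_sub (hc2.intervalIntegrable _ _)
        (intervalIntegrable_const), ← key, ← key2]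
    rw [this]
    have hb : ∀ x ∈ Set.uIoc (t - u) (t + u), ‖deriv (deriv φ) x - D‖ ≤ ε := by
      intro x hx
      rw [Set.uIoc_of_le (by linarith)] at hx
      apply hmod
      rw [abs_le]; constructor <;> [linarith [hx.1]; linarith [hx.2]]
    have := intervalIntegral.norm_integral_le_of_norm_le_const hb
    rw [Real.norm_eq_abs] at this
    calc |∫ x in (t - u)..(t + u), (deriv (deriv φ) x - D)| ≤ ε * |t + u - (t - u)| := this
      _ = 2 * u * ε := by rw [abs_of_pos (by linarith : (0:ℝ) < t + u - (t - u))]; ring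
  -- conclude
  rw [step1]
  have hε : 0 ≤ ε := by simpa using hmod t t (by simp [abs_of_nonneg, hh.le])
  have hb : ∀ᵐ u ∂(volume.restrict (Set.uIoc (0:ℝ) h)), ‖E u‖ ≤ 2 * u * ε := by
    apply MeasureTheory.ae_restrict_of_forall_mem measurableSet_uIoc
    intro u hu
    rw [Set.uIoc_of_le hh.le] at hu
    exact (Real.norm_eq_abs _) ▸ step2 u hu.1 hu.2
  have := intervalIntegral.norm_integral_le_abs_of_norm_le hb
    (((continuous_const.mul continuous_id).mul continuous_const).intervalIntegrable _ _)
  rw [Real.norm_eq_abs] at this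
  refine this.trans ?_
  have : ∫ u in (0:ℝ)..h, 2 * u * ε = h ^ 2 * ε := by
    have : ∀ u : ℝ, 2 * u * ε = u * (2 * ε) := fun u => by ring
    simp_rw [this]
    rw [intervalIntegral.integral_mul_const, integral_id]
    ring
  rw [this, abs_of_nonneg (by positivity)]

lemma cos_two_bound {x : ℝ} (hx0 : 0 ≤ x) (hx1 : x ≤ 1) :
    |2 - 2 * Real.cos x - x ^ 2| ≤ x ^ 4 * (5 / 48) := by
  have hb := Real.cos_bound (x := x) (by rwa [abs_of_nonneg hx0])
  rw [abs_of_nonneg hx0] at hb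
  have : 2 - 2 * Real.cos x - x ^ 2 = -2 * (Real.cos x - (1 - x ^ 2 / 2)) := by ring
  rw [this, abs_mul]
  rw [show |(-2 : ℝ)| = 2 by norm_num]
  nlinarith [hb]

lemma mul_abs_le' {A B C D : ℝ} (h1 : |A| ≤ C) (h2 : |B| ≤ D) : |A * B| ≤ C * D := by
  rw [abs_mul]
  exact mul_le_mul h1 h2 (abs_nonneg _) ((abs_nonneg A).trans h1)

lemma cancel_pos_mul {s A B c X : ℝ} (hs : 0 < s) (h : s * A + s * B ≤ 2 * s * c * X) :
    A + B - 2 * c * X ≤ 0 := by nlinarith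

lemma arith_final (MF Mφ ω ε B h : ℝ) (hMF : 0 ≤ MF) (hMφ : 0 ≤ Mφ)
    (hω : 0 < ω) (hε : 0 < ε) (hB : 0 < B) (hh : 0 < h)
    (hh2 : h ^ 2 ≤ ε / (2 * ((MF * Mφ * ω ^ 4 + 1) * B * (5 / 48)))) :
    MF * (h ^ 2 * (ε / (2 * (MF + 1) * B)) + (ω * h) ^ 4 * (5 / 48) * Mφ)
      ≤ ε / B * h ^ 2 := by
  set Q : ℝ := (MF * Mφ * ω ^ 4 + 1) * B * (5 / 48) with hQ
  have hQ0 : 0 < Q := by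
    apply mul_pos (mul_pos _ hB) (by norm_num)
    nlinarith [mul_nonneg (mul_nonneg hMF hMφ) (pow_nonneg hω.le 4)]
  have t1b : MF * (ε / (2 * (MF + 1) * B)) * B ≤ ε / 2 := by
    have e : MF * (ε / (2 * (MF + 1) * B)) * B = MF * ε / (2 * (MF + 1)) := by
      field_simp
    rw [e, div_le_div_iff₀ (by positivity) (by norm_num : (0:ℝ) < 2)]
    nlinarith
  have c1 : MF * ω ^ 4 * (5 / 48) * Mφ * B ≤ Q := by rw [hQ]; nlinarith
  have c2 : h ^ 2 * Q ≤ ε / 2 := by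
    have h1 := mul_le_mul_of_nonneg_right hh2 hQ0.le
    calc h ^ 2 * Q ≤ ε / (2 * Q) * Q := h1
      _ = ε / 2 := by field_simp
  have t2b : MF * ω ^ 4 * (5 / 48) * Mφ * B * h ^ 2 ≤ ε / 2 := by
    nlinarith [mul_le_mul_of_nonneg_right c1 (sq_nonneg h)]
  have p1 : h ^ 2 * (MF * (ε / (2 * (MF + 1) * B)) * B) ≤ h ^ 2 * (ε / 2) :=
    mul_le_mul_of_nonneg_left t1b (sq_nonneg h)
  have t2c : MF * ω ^ 4 * (5 / 48) * Mφ * B * h ^ 2 * h ^ 2 ≤ ε / 2 * h ^ 2 :=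
    mul_le_mul_of_nonneg_right t2b (sq_nonneg h)
  rw [div_mul_eq_mul_div, le_div_iff₀ hB]
  nlinarith [p1, t2c]


lemma part2 (K a b : ℝ) (hK : 0 < K) (hab : a < b) (F : ℝ → ℝ) (C : NNReal)
    (hF : LipschitzWith C F)
    (hsize : (b - a) * Real.sqrt K < Real.pi)
    (hcore : ∀ p q t : ℝ, a ≤ p → q ≤ b → p < t → t < q →
      Real.sin (Real.sqrt K * (q - t)) * F p + Real.sin (Real.sqrt K * (t - p)) * F q
        ≤ Real.sin (Real.sqrt K * (q - p)) * F t)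
    (φ : ℝ → ℝ) (hφ : ContDiff ℝ (⊤ : ℕ∞) φ) (hcs : HasCompactSupport φ)
    (hsupp : tsupport φ ⊆ Set.Ioo a b) (hφpos : ∀ t, 0 ≤ φ t) :
    ∫ t in Set.Ioo a b, F t * (deriv (deriv φ) t + K * φ t) ≤ 0 := by
  have hFc : Continuous F := hF.continuous
  have hB : (0:ℝ) < b - a := by linarith
  set ω := Real.sqrt K with hωdef
  have hω : 0 < ω := Real.sqrt_pos.2 hK
  have hK2 : ω ^ 2 = K := Real.sq_sqrt hK.le
  have hφ2 : ContDiff ℝ (⊤ : ℕ∞) (deriv (deriv φ)) := by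
    have := hφ.iterate_deriv 2
    simpa [Function.iterate_succ, Function.comp] using this
  have hφc : Continuous φ := hφ.continuous
  have hφ2c : Continuous (deriv (deriv φ)) := hφ2.continuous
  rcases Set.eq_empty_or_nonempty (tsupport φ) with hemp | hne
  · have hz : φ = fun _ => (0:ℝ) := by
      funext x
      exact image_eq_zero_of_notMem_tsupport (by rw [hemp]; exact Set.notMem_empty x)
    rw [hz]
    simp
  obtain ⟨m, hm⟩ := hcs.exists_isLeast hne
  obtain ⟨M, hM⟩ := hcs.exists_isGreatest hne
  have hmM : m ≤ M := hm.2 hM.1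
  have ham : a < m := (hsupp hm.1).1
  have hMb : M < b := (hsupp hM.1).2
  set δ := min (m - a) (b - M) with hδdef
  have hδ : 0 < δ := lt_min (by linarith) (by linarith)
  have hδ1 : δ ≤ m - a := min_le_left _ _
  have hδ2 : δ ≤ b - M := min_le_right _ _
  have hφzero : ∀ x, x ∉ Set.Icc m M → φ x = 0 := by
    intro x hx
    apply image_eq_zero_of_notMem_tsupport
    intro hmem
    exact hx ⟨hm.2 hmem, hM.2 hmem⟩
  -- bound on F
  set MF := |F a| + (C : ℝ) * (b - a) with hMFdef
  have hMF0 : 0 ≤ MF := by positivity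
  have hMFb : ∀ x ∈ Set.Icc a b, |F x| ≤ MF := by
    intro x hx
    have hd := hF.dist_le_mul x a
    rw [Real.dist_eq, Real.dist_eq] at hd
    have hxa : |x - a| ≤ b - a := by
      rw [abs_of_nonneg (by linarith [hx.1])]; linarith [hx.2]
    have h1 : |F x - F a| ≤ (C:ℝ) * (b - a) :=
      hd.trans (mul_le_mul_of_nonneg_left hxa C.coe_nonneg)
    have h2 : |F x| ≤ |F a| + |F x - F a| := by
      calc |F x| = |F a + (F x - F a)| := by congr 1; ring
        _ ≤ |F a| + |F x - F a| := abs_add_le _ _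
    rw [hMFdef]; linarith
  -- bound on φ
  obtain ⟨xm, hxm, hxmax⟩ := isCompact_Icc.exists_isMaxOn (Set.nonempty_Icc.2 hmM)
    ((continuous_abs.comp hφc).continuousOn)
  set Mφ := |φ xm| with hMφdef
  have hMφ0 : 0 ≤ Mφ := abs_nonneg _
  have hMφb : ∀ x, |φ x| ≤ Mφ := by
    intro x
    by_cases hx : x ∈ Set.Icc m M
    · exact hxmax hx
    · rw [hφzero x hx]; simpa using hMφ0
  -- uniform continuity of φ''
  have huc : UniformContinuous (deriv (deriv φ)) :=
    (hcs.deriv.deriv).uniformContinuous_of_continuous hφ2c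
  -- the key translated inequality
  have key : ∀ h : ℝ, 0 < h → h < δ →
      ∫ t in Set.Ioo a b, F t * (φ (t + h) + φ (t - h) - 2 * Real.cos (ω * h) * φ t) ≤ 0 := by
    intro h hh hhδ
    have hz1 : ∀ x, x ∉ Set.Ioo a b → F x * φ (x + h) = 0 := by
      intro x hx
      have : φ (x + h) = 0 := by
        apply hφzero
        intro hmem
        exact hx ⟨by linarith [hmem.1], by linarith [hmem.2]⟩
      rw [this, mul_zero]
    have hz2 : ∀ x, x ∉ Set.Ioo a b → F (x + h) * φ x = 0 := by
      intro x hx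
      have : φ x = 0 := hφzero x (fun hmem => hx ⟨by linarith [hmem.1], by linarith [hmem.2]⟩)
      rw [this, mul_zero]
    have hz3 : ∀ x, x ∉ Set.Ioo a b → F x * φ (x - h) = 0 := by
      intro x hx
      have : φ (x - h) = 0 := by
        apply hφzero
        intro hmem
        exact hx ⟨by linarith [hmem.1], by linarith [hmem.2]⟩
      rw [this, mul_zero]
    have hz4 : ∀ x, x ∉ Set.Ioo a b → F (x - h) * φ x = 0 := by
      intro x hx
      have : φ x = 0 := hφzero x (fun hmem => hx ⟨by linarith [hmem.1], by linarith [hmem.2]⟩)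
      rw [this, mul_zero]
    have T1 : ∫ t in Set.Ioo a b, F t * φ (t + h) = ∫ t in Set.Ioo a b, F (t - h) * φ t := by
      rw [setIntegral_eq_integral_of_forall_compl_eq_zero hz1,
          setIntegral_eq_integral_of_forall_compl_eq_zero hz4]
      have := MeasureTheory.integral_add_right_eq_self (μ := volume)
        (fun t => F (t - h) * φ t) h
      simpa using this
    have T2 : ∫ t in Set.Ioo a b, F t * φ (t - h) = ∫ t in Set.Ioo a b, F (t + h) * φ t := by
      rw [setIntegral_eq_integral_of_forall_compl_eq_zero hz3,
          setIntegral_eq_integral_of_forall_compl_eq_zero hz2]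
      have := MeasureTheory.integral_add_right_eq_self (μ := volume)
        (fun t => F (t + h) * φ t) (-h)
      simp only [neg_add_cancel_right] at this
      simpa [sub_eq_add_neg] using this
    -- integrability
    have i1 : IntegrableOn (fun t => F t * φ (t + h)) (Set.Ioo a b) volume :=
      ((hFc.mul (hφc.comp (continuous_id.add continuous_const))).integrableOn_Icc
        (a := a) (b := b)).mono_set Set.Ioo_subset_Icc_self
    have i2 : IntegrableOn (fun t => F t * φ (t - h)) (Set.Ioo a b) volume :=
      ((hFc.mul (hφc.comp (continuous_id.sub continuous_const))).integrableOn_Icc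
        (a := a) (b := b)).mono_set Set.Ioo_subset_Icc_self
    have i3 : IntegrableOn (fun t => 2 * Real.cos (ω * h) * (F t * φ t)) (Set.Ioo a b) volume :=
      ((continuous_const.mul (hFc.mul hφc)).integrableOn_Icc
        (a := a) (b := b)).mono_set Set.Ioo_subset_Icc_self
    have i4 : IntegrableOn (fun t => F (t - h) * φ t) (Set.Ioo a b) volume :=
      (((hFc.comp (continuous_id.sub continuous_const)).mul hφc).integrableOn_Icc
        (a := a) (b := b)).mono_set Set.Ioo_subset_Icc_self
    have i5 : IntegrableOn (fun t => F (t + h) * φ t) (Set.Ioo a b) volume :=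
      (((hFc.comp (continuous_id.add continuous_const)).mul hφc).integrableOn_Icc
        (a := a) (b := b)).mono_set Set.Ioo_subset_Icc_self
    have comb : ∫ t in Set.Ioo a b, F t * (φ (t + h) + φ (t - h) - 2 * Real.cos (ω * h) * φ t)
        = ∫ t in Set.Ioo a b,
            (F (t - h) + F (t + h) - 2 * Real.cos (ω * h) * F t) * φ t := by
      have e1 : ∀ t : ℝ, F t * (φ (t + h) + φ (t - h) - 2 * Real.cos (ω * h) * φ t)
          = F t * φ (t + h) + F t * φ (t - h) - 2 * Real.cos (ω * h) * (F t * φ t) :=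
        fun t => by ring
      have e2 : ∀ t : ℝ, (F (t - h) + F (t + h) - 2 * Real.cos (ω * h) * F t) * φ t
          = F (t - h) * φ t + F (t + h) * φ t - 2 * Real.cos (ω * h) * (F t * φ t) :=
        fun t => by ring
      have i12 : IntegrableOn (fun t => F t * φ (t + h) + F t * φ (t - h))
          (Set.Ioo a b) volume := i1.add i2
      have i45 : IntegrableOn (fun t => F (t - h) * φ t + F (t + h) * φ t)
          (Set.Ioo a b) volume := i4.add i5
      simp_rw [e1, e2]
      rw [MeasureTheory.integral_sub i12 i3, MeasureTheory.integral_add i1 i2,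
          MeasureTheory.integral_sub i45 i3, MeasureTheory.integral_add i4 i5,
          T1, T2]
    rw [comb]
    apply setIntegral_nonpos measurableSet_Ioo
    intro x _
    by_cases hxs : φ x = 0
    · rw [hxs, mul_zero]
    · have hxm : x ∈ Set.Icc m M := by
        by_contra hc; exact hxs (hφzero x hc)
      have hx1 : a ≤ x - h := by linarith [hxm.1]
      have hx2 : x + h ≤ b := by linarith [hxm.2]
      have hcore' := hcore (x - h) (x + h) x hx1 hx2 (by linarith) (by linarith)
      rw [show x + h - x = h by ring, show x - (x - h) = h by ring,
          show x + h - (x - h) = 2 * h by ring] at hcore'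
      have h2h : 2 * h ≤ b - a := by linarith
      have hπ : ω * h < Real.pi := by
        have h1 : ω * (2 * h) ≤ ω * (b - a) := mul_le_mul_of_nonneg_left h2h hω.le
        have h2 : ω * (b - a) = (b - a) * ω := mul_comm _ _
        have h3 : ω * (2 * h) = 2 * (ω * h) := by ring
        have h4 : 0 ≤ ω * h := mul_nonneg hω.le hh.le
        linarith
      have hsin : 0 < Real.sin (ω * h) := Real.sin_pos_of_pos_of_lt_pi (mul_pos hω hh) hπ
      rw [show ω * (2 * h) = 2 * (ω * h) by ring, Real.sin_two_mul] at hcore'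
      exact mul_nonpos_iff.2 (Or.inr ⟨cancel_pos_mul hsin hcore', hφpos x⟩)
  -- conclude via epsilon argument
  refine le_of_forall_pos_le_add fun ε hε => ?_
  rw [zero_add]
  set ε₁ := ε / (2 * (MF + 1) * (b - a)) with hε₁def
  have hε₁ : 0 < ε₁ := div_pos hε (mul_pos (mul_pos two_pos (by linarith)) hB)
  obtain ⟨δ₂, hδ₂, hδ₂p⟩ := Metric.uniformContinuous_iff.1 huc ε₁ hε₁
  set Q := (MF * Mφ * ω ^ 4 + 1) * (b - a) * (5 / 48) with hQdef
  have hMMω : 0 ≤ MF * Mφ * ω ^ 4 := mul_nonneg (mul_nonneg hMF0 hMφ0) (pow_nonneg hω.le 4)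
  have hQ0 : 0 < Q := mul_pos (mul_pos (by linarith) hB) (by norm_num)
  set r := Real.sqrt (ε / (2 * Q)) with hrdef
  have hr0 : 0 < r := Real.sqrt_pos.2 (div_pos hε (by linarith))
  set h := min (min (δ / 2) (δ₂ / 2)) (min (1 / (ω + 1)) r) with hhdef
  have hh0 : 0 < h := lt_min (lt_min (by linarith) (by linarith))
    (lt_min (one_div_pos.2 (by linarith)) hr0)
  have hhδ : h < δ := lt_of_le_of_lt ((min_le_left _ _).trans (min_le_left _ _)) (by linarith)
  have hhδ₂ : h < δ₂ := lt_of_le_of_lt ((min_le_left _ _).trans (min_le_right _ _)) (by linarith)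
  have hhω : ω * h ≤ 1 := by
    have h1 : h ≤ 1 / (ω + 1) := (min_le_right _ _).trans (min_le_left _ _)
    have h2 : ω * h ≤ ω * (1 / (ω + 1)) := mul_le_mul_of_nonneg_left h1 hω.le
    have h3 : ω * (1 / (ω + 1)) ≤ 1 := by
      rw [mul_one_div, div_le_one (by positivity)]; linarith
    linarith
  have hhr : h ≤ r := (min_le_right _ _).trans (min_le_right _ _)
  have hh2 : h ^ 2 ≤ ε / (2 * Q) := by
    calc h ^ 2 ≤ r ^ 2 := pow_le_pow_left₀ hh0.le hhr 2
      _ = ε / (2 * Q) := Real.sq_sqrt (div_pos hε (by linarith)).le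
  have hmod : ∀ x y : ℝ, |x - y| ≤ h → |deriv (deriv φ) x - deriv (deriv φ) y| ≤ ε₁ := by
    intro x y hxy
    have hd : dist x y < δ₂ := by rw [Real.dist_eq]; linarith
    have := hδ₂p hd
    rw [Real.dist_eq] at this
    exact this.le
  -- pointwise bound
  have hpoint : ∀ t ∈ Set.Ioo a b,
      F t * (deriv (deriv φ) t + K * φ t)
        - F t * (φ (t + h) + φ (t - h) - 2 * Real.cos (ω * h) * φ t) / h ^ 2
        ≤ ε / (b - a) := by
    intro t ht
    have hs2 := symm_second φ hφ hh0 hmod t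
    have hcb := cos_two_bound (x := ω * h) (mul_nonneg hω.le hh0.le) hhω
    have hΔ : |φ (t + h) + φ (t - h) - 2 * Real.cos (ω * h) * φ t
        - h ^ 2 * (deriv (deriv φ) t + K * φ t)|
        ≤ h ^ 2 * ε₁ + (ω * h) ^ 4 * (5 / 48) * Mφ := by
      have e : φ (t + h) + φ (t - h) - 2 * Real.cos (ω * h) * φ t
          - h ^ 2 * (deriv (deriv φ) t + K * φ t)
          = (φ (t + h) + φ (t - h) - 2 * φ t - h ^ 2 * deriv (deriv φ) t)
            + (2 - 2 * Real.cos (ω * h) - (ω * h) ^ 2) * φ t := by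
        rw [← hK2]; ring
      rw [e]
      refine (abs_add_le _ _).trans ?_
      have h2 : |(2 - 2 * Real.cos (ω * h) - (ω * h) ^ 2) * φ t|
          ≤ (ω * h) ^ 4 * (5 / 48) * Mφ := mul_abs_le' hcb (hMφb t)
      linarith
    have hFt : |F t| ≤ MF := hMFb t ⟨ht.1.le, ht.2.le⟩
    have keyeq : F t * (deriv (deriv φ) t + K * φ t)
        - F t * (φ (t + h) + φ (t - h) - 2 * Real.cos (ω * h) * φ t) / h ^ 2
        = F t * (h ^ 2 * (deriv (deriv φ) t + K * φ t)
            - (φ (t + h) + φ (t - h) - 2 * Real.cos (ω * h) * φ t)) / h ^ 2 := by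
      field_simp
    rw [keyeq, div_le_iff₀ (pow_pos hh0 2)]
    set X := h ^ 2 * (deriv (deriv φ) t + K * φ t)
      - (φ (t + h) + φ (t - h) - 2 * Real.cos (ω * h) * φ t) with hXdef
    have habs : F t * X ≤ MF * (h ^ 2 * ε₁ + (ω * h) ^ 4 * (5 / 48) * Mφ) := by
      calc F t * X ≤ |F t * X| := le_abs_self _
        _ = |F t| * |X| := abs_mul _ _
        _ ≤ MF * (h ^ 2 * ε₁ + (ω * h) ^ 4 * (5 / 48) * Mφ) := by
            apply mul_le_mul hFt ?_ (abs_nonneg _) hMF0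
            rw [hXdef, abs_sub_comm]
            exact hΔ
    refine habs.trans ?_
    rw [hε₁def]
    have hh2' := hh2
    rw [hQdef] at hh2'
    exact arith_final MF Mφ ω ε (b - a) h hMF0 hMφ0 hω hε hB hh0 hh2'
  -- assemble
  have hgint : IntegrableOn (fun t => F t * (deriv (deriv φ) t + K * φ t))
      (Set.Ioo a b) volume :=
    ((hFc.mul (hφ2c.add (continuous_const.mul hφc))).integrableOn_Icc
      (a := a) (b := b)).mono_set Set.Ioo_subset_Icc_self
  have hdc : Continuous (fun t => F t * (φ (t + h) + φ (t - h)
      - 2 * Real.cos (ω * h) * φ t) / h ^ 2) := by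
    apply Continuous.div_const
    exact hFc.mul (((hφc.comp (continuous_id.add continuous_const)).add
      (hφc.comp (continuous_id.sub continuous_const))).sub (continuous_const.mul hφc))
  have hdint : IntegrableOn (fun t => F t * (φ (t + h) + φ (t - h)
      - 2 * Real.cos (ω * h) * φ t) / h ^ 2) (Set.Ioo a b) volume :=
    (hdc.integrableOn_Icc (a := a) (b := b)).mono_set Set.Ioo_subset_Icc_self
  have hId : ∫ t in Set.Ioo a b, F t * (φ (t + h) + φ (t - h)
      - 2 * Real.cos (ω * h) * φ t) / h ^ 2 ≤ 0 := by
    rw [MeasureTheory.integral_div]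
    exact div_nonpos_of_nonpos_of_nonneg (key h hh0 hhδ) (sq_nonneg h)
  have hsub : ∫ t in Set.Ioo a b, (F t * (deriv (deriv φ) t + K * φ t)
      - F t * (φ (t + h) + φ (t - h) - 2 * Real.cos (ω * h) * φ t) / h ^ 2) ≤ ε := by
    have hconst : IntegrableOn (fun _ : ℝ => ε / (b - a)) (Set.Ioo a b) volume := by
      exact integrableOn_const (by rw [Real.volume_Ioo]; exact ENNReal.ofReal_ne_top)
    have hle := setIntegral_mono_on (hgint.sub hdint) hconst measurableSet_Ioo hpoint
    rw [setIntegral_const] at hle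
    rw [Real.volume_real_Ioo_of_le hab.le, smul_eq_mul] at hle
    calc ∫ t in Set.Ioo a b, (F t * (deriv (deriv φ) t + K * φ t)
          - F t * (φ (t + h) + φ (t - h) - 2 * Real.cos (ω * h) * φ t) / h ^ 2)
        ≤ (b - a) * (ε / (b - a)) := hle
      _ = ε := by rw [mul_comm, div_mul_cancel₀ _ hB.ne']
  rw [MeasureTheory.integral_sub hgint hdint] at hsub
  linarith



lemma pos_factor {ω X : ℝ} (hω : 0 < ω) (h : ω * X ≤ 0) : X ≤ 0 := by nlinarith

lemma le_of_forall_eps {A B D ε₀ : ℝ} (hε₀ : 0 < ε₀) (hD : 0 ≤ D)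
    (h : ∀ ε : ℝ, 0 < ε → ε < ε₀ → A ≤ B + D * ε) : A ≤ B := by
  refine le_of_forall_pos_le_add fun δ hδ => ?_
  have hD1 : (0:ℝ) < D + 1 := by linarith
  have hε' : 0 < min (ε₀ / 2) (δ / (D + 1)) := lt_min (by linarith) (by positivity)
  have h1 := h _ hε' (lt_of_le_of_lt (min_le_left _ _) (by linarith))
  have h2 : D * min (ε₀ / 2) (δ / (D + 1)) ≤ δ := by
    have h3 : D * min (ε₀ / 2) (δ / (D + 1)) ≤ D * (δ / (D + 1)) :=
      mul_le_mul_of_nonneg_left (min_le_right _ _) hD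
    have h4 : D * (δ / (D + 1)) ≤ δ := by
      rw [mul_div_assoc', div_le_iff₀ hD1]
      nlinarith
    linarith
  linarith

lemma final_combine {c1 c2 sL Ip Iq It Fp Fq Ft Ce : ℝ} (hc1 : 0 ≤ c1) (hc2 : 0 ≤ c2)
    (hsL : 0 ≤ sL) (h : c1 * Ip + c2 * Iq - sL * It ≤ 0)
    (e1 : |Ip - Fp| ≤ Ce) (e2 : |Iq - Fq| ≤ Ce) (e3 : |It - Ft| ≤ Ce) :
    c1 * Fp + c2 * Fq ≤ sL * Ft + (c1 + c2 + sL) * Ce := by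
  rw [abs_le] at e1 e2 e3
  have p1 : c1 * (Fp - Ip) ≤ c1 * Ce := mul_le_mul_of_nonneg_left (by linarith [e1.1]) hc1
  have p2 : c2 * (Fq - Iq) ≤ c2 * Ce := mul_le_mul_of_nonneg_left (by linarith [e2.1]) hc2
  have p3 : sL * (It - Ft) ≤ sL * Ce := mul_le_mul_of_nonneg_left (by linarith [e3.2]) hsL
  nlinarith [p1, p2, p3]

lemma ibp2 {ρ : ℝ → ℝ}
    (hρ1 : ∀ y, HasDerivAt ρ (deriv ρ y) y)
    (hρ2 : ∀ y, HasDerivAt (deriv ρ) (deriv (deriv ρ) y) y)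
    (hρc : Continuous ρ) (hρ1c : Continuous (deriv ρ)) (hρ2c : Continuous (deriv (deriv ρ)))
    {u u' : ℝ → ℝ} (ω x A B : ℝ)
    (hu : ∀ y, HasDerivAt u (u' y) y) (hu' : ∀ y, HasDerivAt u' (-(ω ^ 2) * u y) y)
    (hcu : Continuous u) (hcu' : Continuous u') :
    ∫ y in A..B, u y * (deriv (deriv ρ) (x - y) + ω ^ 2 * ρ (x - y))
      = (u B * (-deriv ρ (x - B)) - u' B * ρ (x - B))
        - (u A * (-deriv ρ (x - A)) - u' A * ρ (x - A)) := by
  have hw : ∀ y, HasDerivAt (fun y => -deriv ρ (x - y)) (deriv (deriv ρ) (x - y)) y := by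
    intro y
    have := ((hρ2 (x - y)).comp y ((hasDerivAt_id y).const_sub x)).neg
    simpa [Function.comp_def, Pi.neg_def] using this
  have hv : ∀ y, HasDerivAt (fun y => ρ (x - y)) (-deriv ρ (x - y)) y := by
    intro y
    have := (hρ1 (x - y)).comp y ((hasDerivAt_id y).const_sub x)
    simpa [Function.comp_def] using this
  have cxy : Continuous (fun y => x - y) := continuous_const.sub continuous_id
  have cρ : Continuous (fun y => ρ (x - y)) := hρc.comp cxy
  have cρ1 : Continuous (fun y => deriv ρ (x - y)) := hρ1c.comp cxy
  have cρ2 : Continuous (fun y => deriv (deriv ρ) (x - y)) := hρ2c.comp cxy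
  have i_u' : IntervalIntegrable u' volume A B := hcu'.intervalIntegrable _ _
  have i_w' : IntervalIntegrable (fun y => deriv (deriv ρ) (x - y)) volume A B :=
    cρ2.intervalIntegrable _ _
  have i_v' : IntervalIntegrable (fun y => -deriv ρ (x - y)) volume A B :=
    (cρ1.neg).intervalIntegrable _ _
  have i_u'' : IntervalIntegrable (fun y => -(ω ^ 2) * u y) volume A B :=
    (continuous_const.mul hcu).intervalIntegrable _ _
  have hibp1 := intervalIntegral.integral_mul_deriv_eq_deriv_mul
    (u := u) (u' := u') (v := fun y => -deriv ρ (x - y))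
    (v' := fun y => deriv (deriv ρ) (x - y))
    (fun y _ => hu y) (fun y _ => hw y) i_u' i_w'
  have hibp2 := intervalIntegral.integral_mul_deriv_eq_deriv_mul
    (u := u') (u' := fun y => -(ω ^ 2) * u y) (v := fun y => ρ (x - y))
    (v' := fun y => -deriv ρ (x - y))
    (fun y _ => hu' y) (fun y _ => hv y) i_u'' i_v'
  have split : ∫ y in A..B, u y * (deriv (deriv ρ) (x - y) + ω ^ 2 * ρ (x - y))
      = (∫ y in A..B, u y * deriv (deriv ρ) (x - y))
        + ω ^ 2 * ∫ y in A..B, u y * ρ (x - y) := by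
    have e : ∀ y : ℝ, u y * (deriv (deriv ρ) (x - y) + ω ^ 2 * ρ (x - y))
        = u y * deriv (deriv ρ) (x - y) + ω ^ 2 * (u y * ρ (x - y)) := fun y => by ring
    simp_rw [e]
    rw [intervalIntegral.integral_add (f := fun y => u y * deriv (deriv ρ) (x - y))
      (g := fun y => ω ^ 2 * (u y * ρ (x - y))) ((hcu.mul cρ2).intervalIntegrable _ _)
      ((continuous_const.mul (hcu.mul cρ)).intervalIntegrable _ _),
      intervalIntegral.integral_const_mul]
  have last : ∫ y in A..B, (-(ω ^ 2) * u y) * ρ (x - y)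
      = -(ω ^ 2) * ∫ y in A..B, u y * ρ (x - y) := by
    have e : ∀ y : ℝ, (-(ω ^ 2) * u y) * ρ (x - y) = -(ω ^ 2) * (u y * ρ (x - y)) :=
      fun y => by ring
    simp_rw [e]
    rw [intervalIntegral.integral_const_mul]
  rw [split, hibp1, hibp2, last]
  ring

lemma sin_nonneg_aux {K a b x : ℝ} (hK : 0 < K) (hab : a < b)
    (hsize : (b - a) * Real.sqrt K < Real.pi)
    (hx : 0 ≤ x) (hxb : x ≤ b - a) : 0 ≤ Real.sin (Real.sqrt K * x) := by
  rcases eq_or_lt_of_le hx with rfl | hx'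
  · simp
  · exact (sinpos hK hab hsize hx' hxb).le


lemma part1_interior (K a b : ℝ) (hK : 0 < K) (hab : a < b) (F : ℝ → ℝ) (C : NNReal)
    (hF : LipschitzWith C F)
    (hsize : (b - a) * Real.sqrt K < Real.pi)
    (hdist : ∀ φ : ℝ → ℝ, ContDiff ℝ (⊤ : ℕ∞) φ → HasCompactSupport φ →
        tsupport φ ⊆ Set.Ioo a b → (∀ t, 0 ≤ φ t) →
        ∫ t in Set.Ioo a b, F t * (deriv (deriv φ) t + K * φ t) ≤ 0)
    (p q t : ℝ) (hp : a < p) (hq : q < b) (h1 : p < t) (h2 : t < q) :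
    Real.sin (Real.sqrt K * (q - t)) * F p + Real.sin (Real.sqrt K * (t - p)) * F q
      ≤ Real.sin (Real.sqrt K * (q - p)) * F t := by
  have hFc : Continuous F := hF.continuous
  set ω := Real.sqrt K with hωdef
  have hω : 0 < ω := Real.sqrt_pos.2 hK
  have hK2 : ω ^ 2 = K := Real.sq_sqrt hK.le
  have hc1 : 0 < Real.sin (ω * (q - t)) := sinpos hK hab hsize (by linarith) (by linarith)
  have hc2 : 0 < Real.sin (ω * (t - p)) := sinpos hK hab hsize (by linarith) (by linarith)
  have hsL : 0 < Real.sin (ω * (q - p)) := sinpos hK hab hsize (by linarith) (by linarith)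
  refine le_of_forall_eps (ε₀ := min (p - a) (b - q))
    (D := (Real.sin (ω * (q - t)) + Real.sin (ω * (t - p)) + Real.sin (ω * (q - p))) * C)
    (lt_min (by linarith) (by linarith))
    (mul_nonneg (by linarith) C.coe_nonneg) ?_
  intro ε hε hεlt
  have hεp : ε < p - a := lt_of_lt_of_le hεlt (min_le_left _ _)
  have hεq : ε < b - q := lt_of_lt_of_le hεlt (min_le_right _ _)
  -- the bump
  set ρb : ContDiffBump (0:ℝ) := ⟨ε/2, ε, by linarith, by linarith⟩ with hρbdef
  set ρ : ℝ → ℝ := ρb.normed volume with hρdef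
  have hρsm : ContDiff ℝ (⊤ : ℕ∞) ρ := ρb.contDiff_normed
  have hρc : Continuous ρ := hρsm.continuous
  have hρcs : HasCompactSupport ρ := ρb.hasCompactSupport_normed
  have hρd1 : ∀ y, HasDerivAt ρ (deriv ρ y) y :=
    fun y => (hρsm.differentiable (by simp) y).hasDerivAt
  have hρsm1 : ContDiff ℝ (⊤ : ℕ∞) (deriv ρ) := by simpa using hρsm.iterate_deriv 1
  have hρ1c : Continuous (deriv ρ) := hρsm1.continuous
  have hρd2 : ∀ y, HasDerivAt (deriv ρ) (deriv (deriv ρ) y) y :=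
    fun y => (hρsm1.differentiable (by simp) y).hasDerivAt
  have hρsm2 : ContDiff ℝ (⊤ : ℕ∞) (deriv (deriv ρ)) := by simpa using hρsm1.iterate_deriv 1
  have hρ2c : Continuous (deriv (deriv ρ)) := hρsm2.continuous
  have hρnn : ∀ y, 0 ≤ ρ y := ρb.nonneg_normed
  have hρsupp0 : ∀ y : ℝ, ¬ (|y| < ε) → ρ y = 0 := by
    intro y hy
    have hns : y ∉ Function.support ρ := by
      rw [hρdef, ρb.support_normed_eq]
      intro hmem
      have := mem_ball_zero_iff.1 hmem
      rw [Real.norm_eq_abs] at this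
      exact hy this
    simpa [Function.mem_support, not_not] using hns
  -- the Green function
  set g1 : ℝ → ℝ := fun y => Real.sin (ω * (q - t)) * Real.sin (ω * (y - p)) with hg1def
  set g2 : ℝ → ℝ := fun y => Real.sin (ω * (t - p)) * Real.sin (ω * (q - y)) with hg2def
  have hg1c : Continuous g1 := by
    apply continuous_const.mul
    exact Real.continuous_sin.comp (continuous_const.mul (continuous_id.sub continuous_const))
  have hg2c : Continuous g2 := by
    apply continuous_const.mul
    exact Real.continuous_sin.comp (continuous_const.mul (continuous_const.sub continuous_id))
  set G : ℝ → ℝ := fun y => (Set.Icc p t).indicator g1 y + (Set.Ioc t q).indicator g2 y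
    with hGdef
  have hGint : Integrable G volume :=
    (((hg1c.integrableOn_Icc (a := p) (b := t))).integrable_indicator measurableSet_Icc).add
      ((((hg2c.integrableOn_Icc (a := t) (b := q))).mono_set
        Set.Ioc_subset_Icc_self).integrable_indicator measurableSet_Ioc)
  have hGloc : LocallyIntegrable G volume := hGint.locallyIntegrable
  have hGzero : ∀ y, y ∉ Set.Icc p q → G y = 0 := by
    intro y hy
    have h1' : y ∉ Set.Icc p t := fun hmem => hy ⟨hmem.1, by linarith [hmem.2]⟩
    have h2' : y ∉ Set.Ioc t q := fun hmem => hy ⟨by linarith [hmem.1], hmem.2⟩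
    rw [hGdef]
    simp only [Set.indicator_of_notMem h1', Set.indicator_of_notMem h2', add_zero]
  have hGcs : HasCompactSupport G := HasCompactSupport.intro isCompact_Icc hGzero
  have hGnn : ∀ y, 0 ≤ G y := by
    intro y
    apply add_nonneg
    · apply Set.indicator_nonneg
      intro z hz
      refine mul_nonneg hc1.le (sin_nonneg_aux hK hab hsize ?_ ?_)
      · linarith [hz.1]
      · linarith [hz.2]
    · apply Set.indicator_nonneg
      intro z hz
      refine mul_nonneg hc2.le (sin_nonneg_aux hK hab hsize ?_ ?_)
      · linarith [hz.2]
      · linarith [hz.1]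
  -- the test function
  set L : ℝ →L[ℝ] ℝ →L[ℝ] ℝ := ContinuousLinearMap.lsmul ℝ ℝ with hLdef
  set φ : ℝ → ℝ := MeasureTheory.convolution G ρ L volume with hφdef
  have hφsm : ContDiff ℝ (⊤ : ℕ∞) φ :=
    HasCompactSupport.contDiff_convolution_right L hρcs hGloc hρsm
  have hφcs : HasCompactSupport φ := HasCompactSupport.convolution L hGcs hρcs
  have hφsupp : tsupport φ ⊆ Set.Ioo a b := by
    have hs1 : Function.support φ ⊆ Set.Icc (p - ε) (q + ε) := by
      intro x hx
      have hx2 := MeasureTheory.support_convolution_subset L (f := G) (g := ρ) (μ := volume) hx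
      obtain ⟨y, hy, z, hz, rfl⟩ := Set.mem_add.1 hx2
      have hy2 : y ∈ Set.Icc p q := by
        by_contra hc
        exact (Function.mem_support.1 hy) (hGzero y hc)
      have hz2 : |z| < ε := by
        rw [hρdef, ρb.support_normed_eq] at hz
        have := mem_ball_zero_iff.1 hz
        rwa [Real.norm_eq_abs] at this
      have := abs_lt.1 hz2
      exact ⟨by linarith [hy2.1, this.1], by linarith [hy2.2, this.2]⟩
    refine (closure_minimal hs1 isClosed_Icc).trans ?_
    intro x hx
    exact ⟨by linarith [hx.1], by linarith [hx.2]⟩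
  have hφnn : ∀ x, 0 ≤ φ x := by
    intro x
    rw [hφdef, MeasureTheory.convolution_def]
    apply MeasureTheory.integral_nonneg
    intro y
    simp only [hLdef, ContinuousLinearMap.lsmul_apply, smul_eq_mul]
    exact mul_nonneg (hGnn y) (hρnn _)
  -- derivatives of φ
  have hL1 : ∀ x, HasDerivAt φ (MeasureTheory.convolution G (deriv ρ) L volume x) x :=
    fun x => HasCompactSupport.hasDerivAt_convolution_right L hGloc hρcs
      (hρsm.of_le (by exact_mod_cast le_top)) x
  have hder1 : deriv φ = MeasureTheory.convolution G (deriv ρ) L volume :=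
    funext fun x => (hL1 x).deriv
  have hL2 : ∀ x, HasDerivAt (MeasureTheory.convolution G (deriv ρ) L volume)
      (MeasureTheory.convolution G (deriv (deriv ρ)) L volume x) x :=
    fun x => HasCompactSupport.hasDerivAt_convolution_right L hGloc hρcs.deriv
      (hρsm1.of_le (by exact_mod_cast le_top)) x
  have hder2 : deriv (deriv φ) = MeasureTheory.convolution G (deriv (deriv ρ)) L volume := by
    rw [hder1]
    exact funext fun x => (hL2 x).deriv
  -- derivative facts for the sine pieces
  have hu1 : ∀ y, HasDerivAt (fun y => Real.sin (ω * (y - p)))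
      (ω * Real.cos (ω * (y - p))) y := by
    intro y
    have h := (Real.hasDerivAt_sin (ω * (y - p))).comp y
      (((hasDerivAt_id y).sub_const p).const_mul ω)
    refine h.congr_deriv ?_
    ring
  have hu1' : ∀ y, HasDerivAt (fun y => ω * Real.cos (ω * (y - p)))
      (-(ω ^ 2) * Real.sin (ω * (y - p))) y := by
    intro y
    have h := ((Real.hasDerivAt_cos (ω * (y - p))).comp y
      (((hasDerivAt_id y).sub_const p).const_mul ω)).const_mul ω
    refine h.congr_deriv ?_
    ring
  have hu2 : ∀ y, HasDerivAt (fun y => Real.sin (ω * (q - y)))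
      (-ω * Real.cos (ω * (q - y))) y := by
    intro y
    have h := (Real.hasDerivAt_sin (ω * (q - y))).comp y
      (((hasDerivAt_id y).const_sub q).const_mul ω)
    refine h.congr_deriv ?_
    ring
  have hu2' : ∀ y, HasDerivAt (fun y => -ω * Real.cos (ω * (q - y)))
      (-(ω ^ 2) * Real.sin (ω * (q - y))) y := by
    intro y
    have h := ((Real.hasDerivAt_cos (ω * (q - y))).comp y
      (((hasDerivAt_id y).const_sub q).const_mul ω)).const_mul (-ω)
    refine h.congr_deriv ?_
    ring
  have hcu1 : Continuous (fun y => Real.sin (ω * (y - p))) :=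
    Real.continuous_sin.comp (continuous_const.mul (continuous_id.sub continuous_const))
  have hcu1' : Continuous (fun y => ω * Real.cos (ω * (y - p))) :=
    continuous_const.mul (Real.continuous_cos.comp
      (continuous_const.mul (continuous_id.sub continuous_const)))
  have hcu2 : Continuous (fun y => Real.sin (ω * (q - y))) :=
    Real.continuous_sin.comp (continuous_const.mul (continuous_const.sub continuous_id))
  have hcu2' : Continuous (fun y => -ω * Real.cos (ω * (q - y))) :=
    continuous_const.mul (Real.continuous_cos.comp
      (continuous_const.mul (continuous_const.sub continuous_id)))
  -- the key identity
  have hkey : ∀ x, deriv (deriv φ) x + K * φ x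
      = ω * Real.sin (ω * (q - t)) * ρ (x - p) + ω * Real.sin (ω * (t - p)) * ρ (x - q)
        - ω * Real.sin (ω * (q - p)) * ρ (x - t) := by
    intro x
    have cxy : Continuous (fun y : ℝ => x - y) := continuous_const.sub continuous_id
    have cψ : Continuous (fun y => deriv (deriv ρ) (x - y) + ω ^ 2 * ρ (x - y)) :=
      (hρ2c.comp cxy).add (continuous_const.mul (hρc.comp cxy))
    have hdecomp : ∀ ψ : ℝ → ℝ, (fun y => G y * ψ y)
        = fun y => (Set.Icc p t).indicator (fun y => g1 y * ψ y) y
          + (Set.Ioc t q).indicator (fun y => g2 y * ψ y) y := by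
      intro ψ
      funext y
      show ((Set.Icc p t).indicator g1 y + (Set.Ioc t q).indicator g2 y) * ψ y = _
      by_cases hy1 : y ∈ Set.Icc p t <;> by_cases hy2 : y ∈ Set.Ioc t q <;>
        simp [Set.indicator_of_mem, Set.indicator_of_notMem, hy1, hy2, add_mul]
    have hGψint : ∀ ψ : ℝ → ℝ, Continuous ψ → Integrable (fun y => G y * ψ y) volume := by
      intro ψ hψ
      rw [hdecomp ψ]
      exact ((((hg1c.mul hψ).integrableOn_Icc (a := p) (b := t))).integrable_indicator
          measurableSet_Icc).add
        (((((hg2c.mul hψ).integrableOn_Icc (a := t) (b := q))).mono_set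
          Set.Ioc_subset_Icc_self).integrable_indicator measurableSet_Ioc)
    have hint1 : ∀ ψ : ℝ → ℝ, Continuous ψ →
        (∫ y, G y * ψ y) = (∫ y in p..t, g1 y * ψ y) + ∫ y in t..q, g2 y * ψ y := by
      intro ψ hψ
      rw [hdecomp ψ]
      rw [MeasureTheory.integral_add (f := fun y => (Set.Icc p t).indicator (fun y => g1 y * ψ y) y)
        (g := fun y => (Set.Ioc t q).indicator (fun y => g2 y * ψ y) y)
        ((((hg1c.mul hψ).integrableOn_Icc (a := p) (b := t))).integrable_indicator
          measurableSet_Icc)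
        (((((hg2c.mul hψ).integrableOn_Icc (a := t) (b := q))).mono_set
          Set.Ioc_subset_Icc_self).integrable_indicator measurableSet_Ioc)]
      rw [MeasureTheory.integral_indicator measurableSet_Icc,
          MeasureTheory.integral_indicator measurableSet_Ioc,
          MeasureTheory.integral_Icc_eq_integral_Ioc,
          intervalIntegral.integral_of_le h1.le, intervalIntegral.integral_of_le h2.le]
    rw [hder2, hφdef, MeasureTheory.convolution_def, MeasureTheory.convolution_def]
    simp only [hLdef, ContinuousLinearMap.lsmul_apply, smul_eq_mul]
    rw [← hK2]
    have comb : (∫ y, G y * deriv (deriv ρ) (x - y)) + ω ^ 2 * ∫ y, G y * ρ (x - y)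
        = ∫ y, G y * (deriv (deriv ρ) (x - y) + ω ^ 2 * ρ (x - y)) := by
      have i1' : Integrable (fun y => G y * deriv (deriv ρ) (x - y)) volume :=
        hGψint _ (show Continuous fun y => deriv (deriv ρ) (x - y) from hρ2c.comp cxy)
      have i2' : Integrable (fun y => ω ^ 2 * (G y * ρ (x - y))) volume :=
        (hGψint _ (show Continuous fun y => ρ (x - y) from hρc.comp cxy)).const_mul _
      rw [← MeasureTheory.integral_const_mul, ← MeasureTheory.integral_add i1' i2']
      congr 1
      funext y
      ring
    rw [comb, hint1 _ cψ]
    have e1 : ∀ y : ℝ, g1 y * (deriv (deriv ρ) (x - y) + ω ^ 2 * ρ (x - y))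
        = Real.sin (ω * (q - t))
          * (Real.sin (ω * (y - p)) * (deriv (deriv ρ) (x - y) + ω ^ 2 * ρ (x - y))) := by
      intro y
      rw [hg1def]
      ring
    have e2 : ∀ y : ℝ, g2 y * (deriv (deriv ρ) (x - y) + ω ^ 2 * ρ (x - y))
        = Real.sin (ω * (t - p))
          * (Real.sin (ω * (q - y)) * (deriv (deriv ρ) (x - y) + ω ^ 2 * ρ (x - y))) := by
      intro y
      rw [hg2def]
      ring
    simp_rw [e1, e2]
    rw [intervalIntegral.integral_const_mul, intervalIntegral.integral_const_mul]
    rw [ibp2 hρd1 hρd2 hρc hρ1c hρ2c ω x p t hu1 hu1' hcu1 hcu1']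
    rw [ibp2 hρd1 hρd2 hρc hρ1c hρ2c ω x t q hu2 hu2' hcu2 hcu2']
    simp only [sub_self, mul_zero, Real.sin_zero, Real.cos_zero, mul_one, zero_mul, mul_neg,
      neg_zero, zero_sub, sub_zero]
    have hsinadd : Real.sin (ω * (q - p))
        = Real.sin (ω * (q - t)) * Real.cos (ω * (t - p))
          + Real.cos (ω * (q - t)) * Real.sin (ω * (t - p)) := by
      rw [show ω * (q - p) = ω * (q - t) + ω * (t - p) by ring, Real.sin_add]
    linear_combination (ω * ρ (x - t)) * hsinadd
  -- apply the distributional inequality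
  have hmain := hdist φ hφsm hφcs hφsupp hφnn
  have ia : Integrable (fun x => F x * ρ (x - p)) (volume.restrict (Set.Ioo a b)) :=
    ((hFc.mul (hρc.comp (continuous_id.sub continuous_const))).integrableOn_Icc
      (a := a) (b := b)).mono_set Set.Ioo_subset_Icc_self
  have ib : Integrable (fun x => F x * ρ (x - q)) (volume.restrict (Set.Ioo a b)) :=
    ((hFc.mul (hρc.comp (continuous_id.sub continuous_const))).integrableOn_Icc
      (a := a) (b := b)).mono_set Set.Ioo_subset_Icc_self
  have ic : Integrable (fun x => F x * ρ (x - t)) (volume.restrict (Set.Ioo a b)) :=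
    ((hFc.mul (hρc.comp (continuous_id.sub continuous_const))).integrableOn_Icc
      (a := a) (b := b)).mono_set Set.Ioo_subset_Icc_self
  have ia' : Integrable (fun x => ω * Real.sin (ω * (q - t)) * (F x * ρ (x - p)))
      (volume.restrict (Set.Ioo a b)) := ia.const_mul _
  have ib' : Integrable (fun x => ω * Real.sin (ω * (t - p)) * (F x * ρ (x - q)))
      (volume.restrict (Set.Ioo a b)) := ib.const_mul _
  have ic' : Integrable (fun x => ω * Real.sin (ω * (q - p)) * (F x * ρ (x - t)))
      (volume.restrict (Set.Ioo a b)) := ic.const_mul _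
  have iab : Integrable (fun x => ω * Real.sin (ω * (q - t)) * (F x * ρ (x - p))
      + ω * Real.sin (ω * (t - p)) * (F x * ρ (x - q)))
      (volume.restrict (Set.Ioo a b)) := ia'.add ib'
  have hre : ∫ x in Set.Ioo a b, F x * (deriv (deriv φ) x + K * φ x)
      = ω * Real.sin (ω * (q - t)) * (∫ x in Set.Ioo a b, F x * ρ (x - p))
        + ω * Real.sin (ω * (t - p)) * (∫ x in Set.Ioo a b, F x * ρ (x - q))
        - ω * Real.sin (ω * (q - p)) * (∫ x in Set.Ioo a b, F x * ρ (x - t)) := by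
    have e : Set.EqOn (fun x => F x * (deriv (deriv φ) x + K * φ x))
        (fun x => ω * Real.sin (ω * (q - t)) * (F x * ρ (x - p))
          + ω * Real.sin (ω * (t - p)) * (F x * ρ (x - q))
          - ω * Real.sin (ω * (q - p)) * (F x * ρ (x - t))) (Set.Ioo a b) := by
      intro x _
      simp only
      rw [hkey x]
      ring
    rw [setIntegral_congr_fun measurableSet_Ioo e]
    rw [MeasureTheory.integral_sub iab ic', MeasureTheory.integral_add ia' ib',
        MeasureTheory.integral_const_mul, MeasureTheory.integral_const_mul, MeasureTheory.integral_const_mul]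
  -- evaluation of the mollified integrals
  have heval : ∀ m : ℝ, a < m - ε → m + ε < b →
      |(∫ x in Set.Ioo a b, F x * ρ (x - m)) - F m| ≤ (C : ℝ) * ε := by
    intro m hma hmb
    have hcomp : Continuous fun x : ℝ => ρ (x - m) :=
      hρc.comp (continuous_id.sub continuous_const)
    have hzero : ∀ x, x ∉ Set.Ioo a b → F x * ρ (x - m) = 0 := by
      intro x hx
      have hz : ρ (x - m) = 0 := by
        apply hρsupp0
        intro hlt
        have := abs_lt.1 hlt
        exact hx ⟨by linarith [this.1], by linarith [this.2]⟩
      rw [hz, mul_zero]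
    rw [setIntegral_eq_integral_of_forall_compl_eq_zero hzero]
    have hcs2 : HasCompactSupport (fun x : ℝ => ρ (x - m)) := by
      apply HasCompactSupport.intro (isCompact_Icc (a := m - ε) (b := m + ε))
      intro x hx
      apply hρsupp0
      intro hlt
      have := abs_lt.1 hlt
      exact hx ⟨by linarith [this.1], by linarith [this.2]⟩
    have htot : (∫ x : ℝ, ρ (x - m)) = 1 := by
      rw [MeasureTheory.integral_sub_right_eq_self ρ m]
      exact ρb.integral_normed
    have i1 : Integrable (fun x => F x * ρ (x - m)) volume := by
      apply (hFc.mul hcomp).integrable_of_hasCompactSupport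
      exact hcs2.mul_left
    have i0 : Integrable (fun x : ℝ => ρ (x - m)) volume :=
      hcomp.integrable_of_hasCompactSupport hcs2
    have i2 : Integrable (fun x => F m * ρ (x - m)) volume := i0.const_mul _
    have e2 : (∫ x : ℝ, (F x - F m) * ρ (x - m))
        = (∫ x : ℝ, F x * ρ (x - m)) - F m := by
      have e3 : ∀ x : ℝ, (F x - F m) * ρ (x - m)
          = F x * ρ (x - m) - F m * ρ (x - m) := fun x => by ring
      simp_rw [e3]
      rw [MeasureTheory.integral_sub i1 i2, MeasureTheory.integral_const_mul, htot, mul_one]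
    rw [← e2]
    have hbound : ∀ x : ℝ, |(F x - F m) * ρ (x - m)| ≤ ((C : ℝ) * ε) * ρ (x - m) := by
      intro x
      rw [abs_mul, abs_of_nonneg (hρnn _)]
      by_cases hx : |x - m| < ε
      · apply mul_le_mul_of_nonneg_right ?_ (hρnn _)
        have hd := hF.dist_le_mul x m
        rw [Real.dist_eq, Real.dist_eq] at hd
        calc |F x - F m| ≤ (C : ℝ) * |x - m| := hd
          _ ≤ (C : ℝ) * ε := mul_le_mul_of_nonneg_left hx.le C.coe_nonneg
      · rw [hρsupp0 _ hx, mul_zero, mul_zero]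
    have hi3 : Integrable (fun x : ℝ => ((C : ℝ) * ε) * ρ (x - m)) volume := i0.const_mul _
    have hni := MeasureTheory.norm_integral_le_of_norm_le hi3
      (Filter.Eventually.of_forall (fun x => by rw [Real.norm_eq_abs]; exact hbound x))
    rw [Real.norm_eq_abs] at hni
    refine hni.trans ?_
    rw [MeasureTheory.integral_const_mul, htot, mul_one]
  have hIp := heval p (by linarith) (by linarith)
  have hIq := heval q (by linarith) (by linarith)
  have hIt := heval t (by linarith) (by linarith)
  rw [hre] at hmain
  have hfac : Real.sin (ω * (q - t)) * (∫ x in Set.Ioo a b, F x * ρ (x - p))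
      + Real.sin (ω * (t - p)) * (∫ x in Set.Ioo a b, F x * ρ (x - q))
      - Real.sin (ω * (q - p)) * (∫ x in Set.Ioo a b, F x * ρ (x - t)) ≤ 0 := by
    apply pos_factor hω
    calc ω * (Real.sin (ω * (q - t)) * (∫ x in Set.Ioo a b, F x * ρ (x - p))
          + Real.sin (ω * (t - p)) * (∫ x in Set.Ioo a b, F x * ρ (x - q))
          - Real.sin (ω * (q - p)) * (∫ x in Set.Ioo a b, F x * ρ (x - t)))
        = ω * Real.sin (ω * (q - t)) * (∫ x in Set.Ioo a b, F x * ρ (x - p))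
          + ω * Real.sin (ω * (t - p)) * (∫ x in Set.Ioo a b, F x * ρ (x - q))
          - ω * Real.sin (ω * (q - p)) * (∫ x in Set.Ioo a b, F x * ρ (x - t)) := by ring
      _ ≤ 0 := hmain
  have hfin := final_combine hc1.le hc2.le hsL.le hfac hIp hIq hIt
  calc Real.sin (ω * (q - t)) * F p + Real.sin (ω * (t - p)) * F q
      ≤ Real.sin (ω * (q - p)) * F t
        + (Real.sin (ω * (q - t)) + Real.sin (ω * (t - p)) + Real.sin (ω * (q - p)))
          * ((C : ℝ) * ε) := hfin
    _ = Real.sin (ω * (q - p)) * F t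
        + (Real.sin (ω * (q - t)) + Real.sin (ω * (t - p)) + Real.sin (ω * (q - p)))
          * (C : ℝ) * ε := by ring

lemma part1_core (K a b : ℝ) (hK : 0 < K) (hab : a < b) (F : ℝ → ℝ) (C : NNReal)
    (hF : LipschitzWith C F)
    (hsize : (b - a) * Real.sqrt K < Real.pi)
    (hdist : ∀ φ : ℝ → ℝ, ContDiff ℝ (⊤ : ℕ∞) φ → HasCompactSupport φ →
        tsupport φ ⊆ Set.Ioo a b → (∀ t, 0 ≤ φ t) →
        ∫ t in Set.Ioo a b, F t * (deriv (deriv φ) t + K * φ t) ≤ 0) :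
    ∀ p q t : ℝ, a ≤ p → q ≤ b → p < t → t < q →
      Real.sin (Real.sqrt K * (q - t)) * F p + Real.sin (Real.sqrt K * (t - p)) * F q
        ≤ Real.sin (Real.sqrt K * (q - p)) * F t := by
  intro p q t hp hq h1 h2
  have hFc : Continuous F := hF.continuous
  set ω := Real.sqrt K with hωdef
  set pn : ℕ → ℝ := fun n => p + (t - p) / (n + 2) with hpndef
  set qn : ℕ → ℝ := fun n => q - (q - t) / (n + 2) with hqndef
  have hn2 : ∀ n : ℕ, (0:ℝ) < (n:ℝ) + 2 := fun n => by positivity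
  have hpn_lt : ∀ n, pn n < t := by
    intro n
    have h3 : (t - p) / ((n:ℝ) + 2) < t - p :=
      div_lt_self (by linarith) (by linarith [hn2 n])
    simp only [hpndef]
    linarith
  have hpn_gt : ∀ n, a < pn n := by
    intro n
    have h3 : 0 < (t - p) / ((n:ℝ) + 2) := div_pos (by linarith) (hn2 n)
    simp only [hpndef]
    linarith
  have hqn_gt : ∀ n, t < qn n := by
    intro n
    have h3 : (q - t) / ((n:ℝ) + 2) < q - t :=
      div_lt_self (by linarith) (by linarith [hn2 n])
    simp only [hqndef]
    linarith
  have hqn_lt : ∀ n, qn n < b := by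
    intro n
    have h3 : 0 < (q - t) / ((n:ℝ) + 2) := div_pos (by linarith) (hn2 n)
    simp only [hqndef]
    linarith
  have hineq : ∀ n, Real.sin (ω * (qn n - t)) * F (pn n)
      + Real.sin (ω * (t - pn n)) * F (qn n) ≤ Real.sin (ω * (qn n - pn n)) * F t :=
    fun n => part1_interior K a b hK hab F C hF hsize hdist (pn n) (qn n) t
      (hpn_gt n) (hqn_lt n) (hpn_lt n) (hqn_gt n)
  have htend0 : Filter.Tendsto (fun n : ℕ => ((n:ℝ) + 2)) Filter.atTop Filter.atTop :=
    Filter.tendsto_atTop_add_const_right _ 2 tendsto_natCast_atTop_atTop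
  have hptend : Filter.Tendsto pn Filter.atTop (nhds p) := by
    have hd := Filter.Tendsto.div_atTop (tendsto_const_nhds (x := t - p)) htend0
    have h2' := (tendsto_const_nhds (x := p)).add hd
    simpa using h2'
  have hqtend : Filter.Tendsto qn Filter.atTop (nhds q) := by
    have hd := Filter.Tendsto.div_atTop (tendsto_const_nhds (x := q - t)) htend0
    have h2' := (tendsto_const_nhds (x := q)).sub hd
    simpa using h2'
  have hT1 : Filter.Tendsto (fun n => Real.sin (ω * (qn n - t))) Filter.atTop
      (nhds (Real.sin (ω * (q - t)))) :=
    (Real.continuous_sin.tendsto _).comp ((hqtend.sub_const t).const_mul ω)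
  have hT2 : Filter.Tendsto (fun n => Real.sin (ω * (t - pn n))) Filter.atTop
      (nhds (Real.sin (ω * (t - p)))) :=
    (Real.continuous_sin.tendsto _).comp ((hptend.const_sub t).const_mul ω)
  have hT3 : Filter.Tendsto (fun n => Real.sin (ω * (qn n - pn n))) Filter.atTop
      (nhds (Real.sin (ω * (q - p)))) :=
    (Real.continuous_sin.tendsto _).comp ((hqtend.sub hptend).const_mul ω)
  have hFp : Filter.Tendsto (fun n => F (pn n)) Filter.atTop (nhds (F p)) :=
    (hFc.tendsto p).comp hptend
  have hFq : Filter.Tendsto (fun n => F (qn n)) Filter.atTop (nhds (F q)) :=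
    (hFc.tendsto q).comp hqtend
  exact le_of_tendsto_of_tendsto' ((hT1.mul hFp).add (hT2.mul hFq))
    (hT3.mul tendsto_const_nhds) hineq

lemma comb_mem {a b t₀ t₁ s : ℝ} (h₀ : t₀ ∈ Set.Icc a b) (h₁ : t₁ ∈ Set.Icc a b)
    (hs : s ∈ Set.Icc (0:ℝ) 1) : (1 - s) * t₀ + s * t₁ ∈ Set.Icc a b := by
  obtain ⟨hs0, hs1⟩ := hs
  constructor
  · nlinarith [h₀.1, h₁.1, mul_nonneg (by linarith : (0:ℝ) ≤ 1 - s) (by linarith [h₀.1] : 0 ≤ t₀ - a),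
      mul_nonneg hs0 (by linarith [h₁.1] : 0 ≤ t₁ - a)]
  · nlinarith [mul_nonneg (by linarith : (0:ℝ) ≤ 1 - s) (by linarith [h₀.2] : 0 ≤ b - t₀),
      mul_nonneg hs0 (by linarith [h₁.2] : 0 ≤ b - t₁)]

/-- For `K > 0`, a nonnegative Lipschitz function `f` on `[a,b]` with `(b-a)√K < π`
satisfies `f'' + K f ≤ 0` in the distributional sense on `(a,b)` if and only if it
satisfies the `σ`-concavity inequality with coefficients
`σ_K^{(s)}(θ) = sin(s √K θ)/sin(√K θ)`. -/
theorem statement_7 (K a b : ℝ) (hK : 0 < K) (hab : a < b)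
    (f : ℝ → ℝ) (hf : ∃ C : NNReal, LipschitzOnWith C f (Set.Icc a b))
    (hnonneg : ∀ t ∈ Set.Icc a b, 0 ≤ f t)
    (hsize : (b - a) * Real.sqrt K < Real.pi) :
    (∀ φ : ℝ → ℝ, ContDiff ℝ (⊤ : ℕ∞) φ → HasCompactSupport φ →
        tsupport φ ⊆ Set.Ioo a b → (∀ t, 0 ≤ φ t) →
        ∫ t in Set.Ioo a b, f t * (deriv (deriv φ) t + K * φ t) ≤ 0)
      ↔
    (∀ t₀ ∈ Set.Icc a b, ∀ t₁ ∈ Set.Icc a b, t₀ ≠ t₁ → ∀ s ∈ Set.Icc (0 : ℝ) 1,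
        Real.sin ((1 - s) * (Real.sqrt K * |t₁ - t₀|)) / Real.sin (Real.sqrt K * |t₁ - t₀|)
            * f t₀
          + Real.sin (s * (Real.sqrt K * |t₁ - t₀|)) / Real.sin (Real.sqrt K * |t₁ - t₀|)
            * f t₁
          ≤ f ((1 - s) * t₀ + s * t₁)) := by
  obtain ⟨C, hC⟩ := hf
  obtain ⟨F, hFlip, hFeq⟩ := hC.extend_real
  have hcongr : ∀ φ : ℝ → ℝ, (∫ t in Set.Ioo a b, f t * (deriv (deriv φ) t + K * φ t))
      = ∫ t in Set.Ioo a b, F t * (deriv (deriv φ) t + K * φ t) := by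
    intro φ
    apply setIntegral_congr_fun measurableSet_Ioo
    intro x hx
    simp only
    rw [hFeq (Set.Ioo_subset_Icc_self hx)]
  constructor
  · intro hdist
    have hdistF : ∀ φ : ℝ → ℝ, ContDiff ℝ (⊤ : ℕ∞) φ → HasCompactSupport φ →
        tsupport φ ⊆ Set.Ioo a b → (∀ t, 0 ≤ φ t) →
        ∫ t in Set.Ioo a b, F t * (deriv (deriv φ) t + K * φ t) ≤ 0 := by
      intro φ h1' h2' h3' h4'
      rw [← hcongr φ]
      exact hdist φ h1' h2' h3' h4'
    have hcore := part1_core K a b hK hab F C hFlip hsize hdistF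
    have hconcF := (bridge K a b hK hab F hsize).1 hcore
    intro t₀ h₀ t₁ h₁ hne s hs
    rw [hFeq h₀, hFeq h₁, hFeq (comb_mem h₀ h₁ hs)]
    exact hconcF t₀ h₀ t₁ h₁ hne s hs
  · intro hconc
    have hconcF : ∀ t₀ ∈ Set.Icc a b, ∀ t₁ ∈ Set.Icc a b, t₀ ≠ t₁ → ∀ s ∈ Set.Icc (0 : ℝ) 1,
        Real.sin ((1 - s) * (Real.sqrt K * |t₁ - t₀|)) / Real.sin (Real.sqrt K * |t₁ - t₀|)
            * F t₀
          + Real.sin (s * (Real.sqrt K * |t₁ - t₀|)) / Real.sin (Real.sqrt K * |t₁ - t₀|)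
            * F t₁
          ≤ F ((1 - s) * t₀ + s * t₁) := by
      intro t₀ h₀ t₁ h₁ hne s hs
      have hh := hconc t₀ h₀ t₁ h₁ hne s hs
      rwa [hFeq h₀, hFeq h₁, hFeq (comb_mem h₀ h₁ hs)] at hh
    have hcore := (bridge K a b hK hab F hsize).2 hconcF
    intro φ h1' h2' h3' h4'
    rw [hcongr φ]
    exact part2 K a b hK hab F C hFlip hsize hcore φ h1' h2' h3' h4'
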